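/- Let H1, H2 be Hilbert spaces and A1: H1 → H2, A2: H2 → H1 bounded operators such that 1 is not in the essential spectrum of A1 ∘ A2. Then the graphs V1 = Graph(A1) and V2 = {(A2 h, h)} in H1 ⊕ H2 are quasi-complementary with excess equal to the Fredholm index of (1 − A1 A2). -/

import Mathlib

open Module

/-- A bounded operator is *Fredholm* if its kernel is finite-dimensional and its range is
closed of finite codimension. -/
def IsFredholm {E F : Type*} [NormedAddCommGroup E] [NormedAddCommGroup F]
    [NormedSpace ℂ E] [NormedSpace ℂ F] (T : E →L[ℂ] F) : Prop :=
  FiniteDimensional ℂ (LinearMap.ker (T : E →ₗ[ℂ] F)) ∧ IsClosed (LinearMap.range (T : E →ₗ[ℂ] F) : Set F) ∧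
    FiniteDimensional ℂ (F ⧸ LinearMap.range (T : E →ₗ[ℂ] F))

/-- The Fredholm index: `dim ker T - codim range T`. -/
noncomputable def fredholmIndex {E F : Type*} [NormedAddCommGroup E] [NormedAddCommGroup F]
    [NormedSpace ℂ E] [NormedSpace ℂ F] (T : E →L[ℂ] F) : ℤ :=
  (finrank ℂ (LinearMap.ker (T : E →ₗ[ℂ] F)) : ℤ) - finrank ℂ (F ⧸ LinearMap.range (T : E →ₗ[ℂ] F))

set_option maxHeartbeats 1000000 in
/-- If `A1 : H1 → H2`, `A2 : H2 → H1` are bounded and `1` is not in the essential spectrum of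
`A1 ∘ A2` (i.e. `1 - A1 A2` is Fredholm), then the graphs `V1 = {(x, A1 x)}` and
`V2 = {(A2 h, h)}` in `H1 ⊕ H2` are quasi-complementary with excess the Fredholm index of
`1 - A1 A2`. -/
theorem stmt4 {H1 H2 : Type*}
    [NormedAddCommGroup H1] [InnerProductSpace ℂ H1] [CompleteSpace H1]
    [NormedAddCommGroup H2] [InnerProductSpace ℂ H2] [CompleteSpace H2]
    (A1 : H1 →L[ℂ] H2) (A2 : H2 →L[ℂ] H1)
    (hfred : IsFredholm ((1 : H2 →L[ℂ] H2) - A1.comp A2))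
    (V1 V2 : Submodule ℂ (H1 × H2))
    (hV1 : ∀ p : H1 × H2, p ∈ V1 ↔ p.2 = A1 p.1)
    (hV2 : ∀ p : H1 × H2, p ∈ V2 ↔ p.1 = A2 p.2) :
    FiniteDimensional ℂ ↥(V1 ⊓ V2) ∧
      IsClosed ((V1 ⊔ V2 : Submodule ℂ (H1 × H2)) : Set (H1 × H2)) ∧
      FiniteDimensional ℂ ((H1 × H2) ⧸ (V1 ⊔ V2)) ∧
      (finrank ℂ ↥(V1 ⊓ V2) : ℤ) - finrank ℂ ((H1 × H2) ⧸ (V1 ⊔ V2)) =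
        fredholmIndex ((1 : H2 →L[ℂ] H2) - A1.comp A2) := by
  obtain ⟨hker, hclosed, hquot⟩ := hfred
  set T := (1 : H2 →L[ℂ] H2) - A1.comp A2 with hT
  have hTapp : ∀ h : H2, T h = h - A1 (A2 h) := fun h => rfl
  let Φ : (H1 × H2) →L[ℂ] H2 :=
    ContinuousLinearMap.snd ℂ H1 H2 - A1.comp (ContinuousLinearMap.fst ℂ H1 H2)
  have hΦ : ∀ p : H1 × H2, Φ p = p.2 - A1 p.1 := fun p => rfl
  -- sup characterization
  have hsup : V1 ⊔ V2 = (LinearMap.range (T : H2 →ₗ[ℂ] H2)).comap (Φ : (H1 × H2) →ₗ[ℂ] H2) := by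
    apply le_antisymm
    · refine sup_le ?_ ?_
      · intro p hp
        rw [hV1] at hp
        refine Submodule.mem_comap.2 ⟨0, ?_⟩
        simp [hΦ, hp]
      · intro p hp
        rw [hV2] at hp
        refine Submodule.mem_comap.2 ⟨p.2, ?_⟩
        simp only [ContinuousLinearMap.coe_coe, hTapp, hΦ, hp]
    · intro p hp
      obtain ⟨h, hh⟩ := Submodule.mem_comap.1 hp
      rw [Submodule.mem_sup]
      refine ⟨(p.1 - A2 h, A1 (p.1 - A2 h)), (hV1 _).2 rfl, (A2 h, h), (hV2 _).2 rfl, ?_⟩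
      have hh' : h - A1 (A2 h) = p.2 - A1 p.1 := by
        simpa [hTapp, hΦ] using hh
      refine Prod.ext (by simp) ?_
      simp only [Prod.snd_add, map_sub]
      linear_combination (norm := module) hh'
  -- intersection equiv
  have memInf : ∀ p : H1 × H2, p ∈ V1 ⊓ V2 ↔ p.2 ∈ LinearMap.ker (T : H2 →ₗ[ℂ] H2) ∧ p.1 = A2 p.2 := by
    intro p
    rw [Submodule.mem_inf, hV1, hV2, LinearMap.mem_ker]
    constructor
    · rintro ⟨h1, h2⟩
      refine ⟨?_, h2⟩
      rw [ContinuousLinearMap.coe_coe, hTapp, ← h2, ← h1, sub_self]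
    · rintro ⟨h1, h2⟩
      rw [ContinuousLinearMap.coe_coe, hTapp, sub_eq_zero] at h1
      exact ⟨by rw [h1, h2], h2⟩
  let e1 : (LinearMap.ker (T : H2 →ₗ[ℂ] H2)) ≃ₗ[ℂ] ↥(V1 ⊓ V2) :=
    { toFun := fun h => ⟨(A2 h.1, h.1), (memInf _).2 ⟨h.2, rfl⟩⟩
      map_add' := fun x y => Subtype.ext (by simp [Prod.ext_iff])
      map_smul' := fun c x => Subtype.ext (by simp [Prod.ext_iff])
      invFun := fun p => ⟨p.1.2, ((memInf _).1 p.2).1⟩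
      left_inv := fun h => rfl
      right_inv := fun p => by
        ext
        · exact (((memInf _).1 p.2).2).symm
        · rfl }
  -- the quotient map
  let q : (H1 × H2) →ₗ[ℂ] H2 ⧸ LinearMap.range (T : H2 →ₗ[ℂ] H2) :=
    (LinearMap.range (T : H2 →ₗ[ℂ] H2)).mkQ.comp (Φ : (H1 × H2) →ₗ[ℂ] H2)
  have hqsurj : Function.Surjective q := by
    intro x
    obtain ⟨v, rfl⟩ := Submodule.mkQ_surjective _ x
    exact ⟨(0, v), by simp [q, hΦ]⟩
  have hqker : LinearMap.ker q = V1 ⊔ V2 := by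
    rw [hsup]
    show LinearMap.ker ((LinearMap.range (T : H2 →ₗ[ℂ] H2)).mkQ.comp (Φ : (H1 × H2) →ₗ[ℂ] H2)) = _
    rw [LinearMap.ker_comp, Submodule.ker_mkQ]
  let e2 : ((H1 × H2) ⧸ (V1 ⊔ V2)) ≃ₗ[ℂ]
      (H2 ⧸ LinearMap.range (T : H2 →ₗ[ℂ] H2)) :=
    (Submodule.quotEquivOfEq _ _ hqker.symm).trans (q.quotKerEquivOfSurjective hqsurj)
  have fin1 : FiniteDimensional ℂ ↥(V1 ⊓ V2) := Module.Finite.equiv e1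
  have fin2 : FiniteDimensional ℂ ((H1 × H2) ⧸ (V1 ⊔ V2)) := Module.Finite.equiv e2.symm
  refine ⟨fin1, ?_, fin2, ?_⟩
  · have : ((V1 ⊔ V2 : Submodule ℂ (H1 × H2)) : Set (H1 × H2)) =
        Φ ⁻¹' (LinearMap.range (T : H2 →ₗ[ℂ] H2) : Set H2) := by
      rw [hsup]; rfl
    rw [this]
    exact hclosed.preimage Φ.continuous
  · rw [fredholmIndex, e1.finrank_eq, e2.finrank_eq]
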